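/- Let S ≻ 0 be symmetric, L ∈ ℝ^{n×n} with S L + Lᵀ S ≺ 0, c ∈ ℝⁿ, and let Q be a quadratic nonlinearity with yᵀ S Q(y) = 0 for all y. Then there exists R > 0 such that for every y with ‖y‖ ≥ R, the derivative of V(y) = yᵀ S y along the vector field f(y) = L y + Q(y) + c is strictly negative: 2 yᵀ S f(y) < 0. -/

import Mathlib

open Matrix

lemma dot_cs {n : ℕ} (x v : Fin n → ℝ) :
    x ⬝ᵥ v ≤ Real.sqrt (x ⬝ᵥ x) * Real.sqrt (v ⬝ᵥ v) := by
  have h := real_inner_le_norm ((EuclideanSpace.equiv (Fin n) ℝ).symm x)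
    ((EuclideanSpace.equiv (Fin n) ℝ).symm v)
  simp only [PiLp.inner_apply, EuclideanSpace.norm_eq, RCLike.inner_apply, conj_trivial] at h
  rw [dotProduct_comm]
  simpa [dotProduct, sq] using h

lemma posdef_lower {n : ℕ} (M : Matrix (Fin n) (Fin n) ℝ) (hM : M.PosDef) :
    ∃ μ : ℝ, 0 < μ ∧ ∀ x : Fin n → ℝ, μ * (x ⬝ᵥ x) ≤ x ⬝ᵥ M.mulVec x := by
  rcases Nat.eq_zero_or_pos n with hn | hn
  · subst hn
    exact ⟨1, one_pos, fun x => by simp [dotProduct, mulVec]⟩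
  · haveI : Nonempty (Fin n) := ⟨⟨0, hn⟩⟩
    set E := EuclideanSpace ℝ (Fin n)
    have hcont : Continuous fun x : E => (x : Fin n → ℝ) ⬝ᵥ M.mulVec x := by
      have hco : ∀ i, Continuous fun x : E => (x : Fin n → ℝ) i :=
        fun i => (continuous_apply i).comp (PiLp.continuous_ofLp 2 fun _ : Fin n => ℝ)
      unfold dotProduct mulVec
      exact continuous_finset_sum _ fun i _ => (hco i).mul
        (continuous_finset_sum _ fun j _ => continuous_const.mul (hco j))
    have hsph : IsCompact (Metric.sphere (0 : E) 1) := isCompact_sphere 0 1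
    have hne : (Metric.sphere (0 : E) 1).Nonempty := NormedSpace.sphere_nonempty.2 zero_le_one
    obtain ⟨x₀, hx₀mem, hx₀min⟩ := hsph.exists_isMinOn hne hcont.continuousOn
    have hx₀norm : ‖x₀‖ = 1 := by simpa using hx₀mem
    have hx₀ne : (x₀ : Fin n → ℝ) ≠ 0 := by
      intro h
      have : x₀ = 0 := by
        ext i; exact congrFun h i
      rw [this] at hx₀norm; simp at hx₀norm
    refine ⟨(x₀ : Fin n → ℝ) ⬝ᵥ M.mulVec x₀, by simpa using hM.dotProduct_mulVec_pos hx₀ne, fun x => ?_⟩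
    by_cases hx : x = 0
    · simp [hx]
    · set xE : E := (EuclideanSpace.equiv (Fin n) ℝ).symm x
      have hxEne : xE ≠ 0 := by
        exact (EuclideanSpace.equiv (Fin n) ℝ).symm.toLinearEquiv.map_ne_zero_iff.2 hx
      have ht : (0:ℝ) < ‖xE‖ := norm_pos_iff.2 hxEne
      set u : E := ‖xE‖⁻¹ • xE
      have hu : u ∈ Metric.sphere (0 : E) 1 := by
        simp [u, norm_smul, abs_of_pos (inv_pos.2 ht), inv_mul_cancel₀ ht.ne']
      have hmin := hx₀min hu
      have hxu : (x : Fin n → ℝ) = ‖xE‖ • (u : Fin n → ℝ) := by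
        ext i
        simp [u, smul_smul, mul_inv_cancel₀ ht.ne']
        show x i = ‖xE‖ * (‖xE‖⁻¹ * x i)
        rw [← mul_assoc, mul_inv_cancel₀ ht.ne', one_mul]
      have hq : (x : Fin n → ℝ) ⬝ᵥ M.mulVec x = ‖xE‖^2 * ((u : Fin n → ℝ) ⬝ᵥ M.mulVec u) := by
        rw [hxu, smul_dotProduct, mulVec_smul, dotProduct_smul]
        simp only [smul_eq_mul]; ring
      have hxx : (x : Fin n → ℝ) ⬝ᵥ x = ‖xE‖^2 := by
        have := real_inner_self_eq_norm_sq xE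
        rw [← this]
        simp [PiLp.inner_apply, dotProduct]
        rw [EuclideanSpace.norm_eq, Real.sq_sqrt (by positivity)]
        simp [xE, sq]
      rw [hq, hxx]
      have := hmin
      simp only [Set.mem_setOf_eq] at this
      nlinarith [sq_nonneg ‖xE‖]

/-- The quadratic nonlinearity `Q(x)ᵢ = xᵀ Qᵢ x`. -/
def quadNL {n : ℕ} (Qm : Fin n → Matrix (Fin n) (Fin n) ℝ) (x : Fin n → ℝ) :
    Fin n → ℝ := fun i => x ⬝ᵥ (Qm i).mulVec x

theorem stmt_18 {n : ℕ} (S L : Matrix (Fin n) (Fin n) ℝ) (hS : S.PosDef)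
    (hSL : (-(S * L + Lᵀ * S)).PosDef) (c : Fin n → ℝ)
    (Qm : Fin n → Matrix (Fin n) (Fin n) ℝ) (hQsym : ∀ i, (Qm i).IsSymm)
    (hloss : ∀ y : Fin n → ℝ, y ⬝ᵥ S.mulVec (quadNL Qm y) = 0) :
    ∃ R : ℝ, 0 < R ∧ ∀ y : Fin n → ℝ, R ≤ Real.sqrt (y ⬝ᵥ y) →
      2 * (y ⬝ᵥ S.mulVec (L.mulVec y + quadNL Qm y + c)) < 0 := by
  obtain ⟨μ, hμ, hq⟩ := posdef_lower _ hSL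
  have hSsym : Sᵀ = S := by
    have := hS.1.eq
    simpa using this
  set K := Real.sqrt (S.mulVec c ⬝ᵥ S.mulVec c) with hKdef
  have hK0 : 0 ≤ K := Real.sqrt_nonneg _
  refine ⟨max 1 ((2*K+1)/μ), lt_of_lt_of_le one_pos (le_max_left _ _), fun y hy => ?_⟩
  set t := Real.sqrt (y ⬝ᵥ y) with htdef
  have hyy0 : 0 ≤ y ⬝ᵥ y := Finset.sum_nonneg fun i _ => mul_self_nonneg _
  have hyy : y ⬝ᵥ y = t^2 := (Real.sq_sqrt hyy0).symm
  have ht1 : 1 ≤ t := le_trans (le_max_left _ _) hy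
  have htμ : 2*K+1 ≤ μ*t := by
    have h2 := le_trans (le_max_right 1 ((2*K+1)/μ)) hy
    calc 2*K+1 = ((2*K+1)/μ) * μ := by field_simp
    _ ≤ t * μ := mul_le_mul_of_nonneg_right h2 hμ.le
    _ = μ * t := mul_comm _ _
  -- split the dot product
  have hsplit : y ⬝ᵥ S.mulVec (L.mulVec y + quadNL Qm y + c)
      = y ⬝ᵥ S.mulVec (L.mulVec y) + y ⬝ᵥ S.mulVec c := by
    rw [mulVec_add, mulVec_add, dotProduct_add, dotProduct_add, hloss y]
    ring
  -- quadratic form identity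
  have hkey : (L *ᵥ y) ⬝ᵥ (S *ᵥ y) = y ⬝ᵥ S *ᵥ (L *ᵥ y) := by
    rw [dotProduct_mulVec]
    conv_lhs => rw [← hSsym, vecMul_transpose]
    exact dotProduct_comm _ _
  have hMy : y ⬝ᵥ (-(S * L + Lᵀ * S)) *ᵥ y = -(2 * (y ⬝ᵥ S *ᵥ (L *ᵥ y))) := by
    have h1 : y ⬝ᵥ (Lᵀ * S) *ᵥ y = y ⬝ᵥ S *ᵥ (L *ᵥ y) := by
      rw [← mulVec_mulVec, dotProduct_mulVec, vecMul_transpose, hkey]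
    have h2 : y ⬝ᵥ (S * L) *ᵥ y = y ⬝ᵥ S *ᵥ (L *ᵥ y) := by
      rw [← mulVec_mulVec]
    rw [neg_mulVec, dotProduct_neg, add_mulVec, dotProduct_add, h1, h2]
    ring
  have hq' := hq y
  rw [hMy, hyy] at hq'
  have hCS : y ⬝ᵥ S.mulVec c ≤ t * K := dot_cs y (S.mulVec c)
  rw [hsplit]
  nlinarith [hq', hCS, htμ, ht1, hK0, hμ]
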